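/- Let S ⊆ ℤ² be a set with no pathological configuration. Then any two 8-adjacent points of S are either 4-adjacent or have a common 4-adjacent point lying in S; consequently, the 4-connected components of S coincide with the 8-connected components of S. -/

import Mathlib

/-- Points of the digital plane ℤ². -/
abbrev Pt := ℤ × ℤ

/-- 4-adjacency: the two points differ by 1 in exactly one coordinate
(ℓ¹-distance 1). -/
def Adj4 (p q : Pt) : Prop := |p.1 - q.1| + |p.2 - q.2| = 1

/-- 8-adjacency: the two points are distinct and differ by at most 1 in each
coordinate. -/
def Adj8 (p q : Pt) : Prop := p ≠ q ∧ |p.1 - q.1| ≤ 1 ∧ |p.2 - q.2| ≤ 1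

/-- A set `A` is 4-connected: any two of its points are joined by a path inside `A`
whose consecutive points are 4-adjacent. -/
def Conn4 (A : Set Pt) : Prop :=
  ∀ p ∈ A, ∀ q ∈ A,
    Relation.ReflTransGen (fun x y => x ∈ A ∧ y ∈ A ∧ Adj4 x y) p q

/-- A set `A` is 8-connected: any two of its points are joined by a path inside `A`
whose consecutive points are 8-adjacent. -/
def Conn8 (A : Set Pt) : Prop :=
  ∀ p ∈ A, ∀ q ∈ A,
    Relation.ReflTransGen (fun x y => x ∈ A ∧ y ∈ A ∧ Adj8 x y) p q

/-- `comp` is a 4-connected component of `A`: a maximal 4-connected subset. -/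
def IsComp4 (A comp : Set Pt) : Prop :=
  comp.Nonempty ∧ comp ⊆ A ∧ Conn4 comp ∧
    ∀ T, comp ⊆ T → T ⊆ A → Conn4 T → T = comp

/-- `comp` is an 8-connected component of `A`: a maximal 8-connected subset. -/
def IsComp8 (A comp : Set Pt) : Prop :=
  comp.Nonempty ∧ comp ⊆ A ∧ Conn8 comp ∧
    ∀ T, comp ⊆ T → T ⊆ A → Conn8 T → T = comp

/-- `A` contains a pathological configuration: a unit 2×2 block of ℤ² meeting `A`
in exactly two diagonally opposite points. -/
def Patho (A : Set Pt) : Prop :=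
  ∃ x y : ℤ,
    (((x, y) ∈ A ∧ (x + 1, y + 1) ∈ A ∧ (x + 1, y) ∉ A ∧ (x, y + 1) ∉ A) ∨
     ((x + 1, y) ∈ A ∧ (x, y + 1) ∈ A ∧ (x, y) ∉ A ∧ (x + 1, y + 1) ∉ A))



/-- helper to unfold abs for omega -/
private lemma abs_facts (a : ℤ) : (|a| = a ∨ |a| = -a) ∧ 0 ≤ |a| :=
  ⟨abs_choice a, abs_nonneg a⟩

lemma adj4_symm' {p q : Pt} (h : Adj4 p q) : Adj4 q p := by
  unfold Adj4 at *
  rw [abs_sub_comm q.1, abs_sub_comm q.2]; exact h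

lemma adj8_symm' {p q : Pt} (h : Adj8 p q) : Adj8 q p := by
  obtain ⟨h1, h2, h3⟩ := h
  exact ⟨h1.symm, by rwa [abs_sub_comm], by rwa [abs_sub_comm]⟩

lemma adj4_to_adj8 {p q : Pt} (h : Adj4 p q) : Adj8 p q := by
  unfold Adj4 at h; unfold Adj8
  obtain ⟨c1, c2⟩ := abs_facts (p.1 - q.1)
  obtain ⟨c3, c4⟩ := abs_facts (p.2 - q.2)
  refine ⟨fun he => ?_, by omega, by omega⟩
  rw [he] at h; simp at h

/-- The restricted relation inside a set. -/
def Rel' (S : Set Pt) (adj : Pt → Pt → Prop) (x y : Pt) : Prop :=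
  x ∈ S ∧ y ∈ S ∧ adj x y

/-- The reachability class of `a` in `S`. -/
def CompOf (S : Set Pt) (adj : Pt → Pt → Prop) (a : Pt) : Set Pt :=
  {x | x ∈ S ∧ Relation.ReflTransGen (Rel' S adj) a x}

lemma isComp_iff (S : Set Pt) (adj : Pt → Pt → Prop)
    (hsym : ∀ p q, adj p q → adj q p) (comp : Set Pt) :
    (comp.Nonempty ∧ comp ⊆ S ∧
      (∀ p ∈ comp, ∀ q ∈ comp,
        Relation.ReflTransGen (fun x y => x ∈ comp ∧ y ∈ comp ∧ adj x y) p q) ∧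
      ∀ T, comp ⊆ T → T ⊆ S → (∀ p ∈ T, ∀ q ∈ T,
        Relation.ReflTransGen (fun x y => x ∈ T ∧ y ∈ T ∧ adj x y) p q) → T = comp)
      ↔ ∃ a ∈ S, comp = CompOf S adj a := by
  -- restricted path lemma
  have restrict : ∀ a p, Relation.ReflTransGen (Rel' S adj) a p →
      Relation.ReflTransGen
        (fun x y => x ∈ CompOf S adj a ∧ y ∈ CompOf S adj a ∧ adj x y) a p := by
    intro a p h
    induction h with
    | refl => exact Relation.ReflTransGen.refl
    | tail hab step ih =>
        obtain ⟨hb, hc, hadj⟩ := step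
        exact ih.tail ⟨⟨hb, hab⟩, ⟨hc, hab.tail ⟨hb, hc, hadj⟩⟩, hadj⟩
  have symC : ∀ a : Pt, Symmetric
      (fun x y => x ∈ CompOf S adj a ∧ y ∈ CompOf S adj a ∧ adj x y) := by
    intro a x y ⟨hx, hy, h⟩; exact ⟨hy, hx, hsym _ _ h⟩
  have connC : ∀ a, a ∈ S → ∀ p ∈ CompOf S adj a, ∀ q ∈ CompOf S adj a,
      Relation.ReflTransGen
        (fun x y => x ∈ CompOf S adj a ∧ y ∈ CompOf S adj a ∧ adj x y) p q := by
    intro a _ p hp q hq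
    exact ((@Relation.ReflTransGen.stdSymm _ _ ⟨symC a⟩).symm _ _ (restrict a p hp.2)).trans
      (restrict a q hq.2)
  have maxC : ∀ a, a ∈ S → ∀ T, CompOf S adj a ⊆ T → T ⊆ S →
      (∀ p ∈ T, ∀ q ∈ T, Relation.ReflTransGen
        (fun x y => x ∈ T ∧ y ∈ T ∧ adj x y) p q) → T = CompOf S adj a := by
    intro a ha T hsub hTS hconn
    refine Set.Subset.antisymm (fun t ht => ?_) hsub
    have haT : a ∈ T := hsub ⟨ha, Relation.ReflTransGen.refl⟩
    exact ⟨hTS ht, Relation.ReflTransGen.mono (fun x y ⟨hx, hy, h⟩ => ⟨hTS hx, hTS hy, h⟩) _ _ (hconn a haT t ht)⟩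
  constructor
  · rintro ⟨⟨a, ha⟩, hsub, hconn, hmax⟩
    have haS : a ∈ S := hsub ha
    refine ⟨a, haS, ?_⟩
    have h1 : comp ⊆ CompOf S adj a := fun p hp =>
      ⟨hsub hp, Relation.ReflTransGen.mono (fun x y ⟨hx, hy, h⟩ => ⟨hsub hx, hsub hy, h⟩) _ _ (hconn a ha p hp)⟩
    exact (hmax _ h1 (fun x hx => hx.1) (connC a haS)).symm
  · rintro ⟨a, haS, rfl⟩
    exact ⟨⟨a, haS, Relation.ReflTransGen.refl⟩, fun x hx => hx.1,
      connC a haS, maxC a haS⟩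

lemma mk_adj4 (a b c d : ℤ)
    (h : (a = c ∧ (b = d + 1 ∨ b = d - 1)) ∨ (b = d ∧ (a = c + 1 ∨ a = c - 1))) :
    Adj4 (a, b) (c, d) := by
  show |a - c| + |b - d| = 1
  obtain ⟨c1, c2⟩ := abs_facts (a - c)
  obtain ⟨c3, c4⟩ := abs_facts (b - d)
  omega

lemma key_lemma (S : Set Pt) (hpath : ¬ Patho S) :
    ∀ p ∈ S, ∀ q ∈ S, Adj8 p q → Adj4 p q ∨ ∃ r ∈ S, Adj4 p r ∧ Adj4 r q := by
  rintro ⟨p1, p2⟩ hp ⟨q1, q2⟩ hq ⟨hne, h1, h2⟩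
  have hne' : ¬(p1 = q1 ∧ p2 = q2) := by
    rintro ⟨e1, e2⟩; exact hne (by rw [e1, e2])
  dsimp only at h1 h2
  obtain ⟨c1, c2⟩ := abs_facts (p1 - q1)
  obtain ⟨c3, c4⟩ := abs_facts (p2 - q2)
  by_cases hd1 : p1 = q1
  · exact Or.inl (mk_adj4 _ _ _ _ (by omega))
  by_cases hd2 : p2 = q2
  · exact Or.inl (mk_adj4 _ _ _ _ (by omega))
  right
  have hx : p1 = q1 + 1 ∨ p1 = q1 - 1 := by omega
  have hy : p2 = q2 + 1 ∨ p2 = q2 - 1 := by omega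
  clear c1 c2 c3 c4 h1 h2 hne hne' hd1 hd2
  rcases hx with rfl | rfl <;> rcases hy with rfl | rfl
  · have hmem : (q1 + 1, q2) ∈ S ∨ (q1, q2 + 1) ∈ S := by
      by_contra h; push_neg at h
      exact hpath ⟨q1, q2, Or.inl ⟨hq, hp, h.1, h.2⟩⟩
    rcases hmem with h | h
    · exact ⟨_, h, mk_adj4 _ _ _ _ (by omega), mk_adj4 _ _ _ _ (by omega)⟩
    · exact ⟨_, h, mk_adj4 _ _ _ _ (by omega), mk_adj4 _ _ _ _ (by omega)⟩
  · have hmem : (q1, q2 - 1) ∈ S ∨ (q1 + 1, q2) ∈ S := by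
      by_contra h; push_neg at h
      have hq' : (q1, q2 - 1 + 1) ∈ S := by
        rw [show q2 - 1 + 1 = q2 by ring]; exact hq
      have h2' : (q1 + 1, q2 - 1 + 1) ∉ S := by
        rw [show q2 - 1 + 1 = q2 by ring]; exact h.2
      exact hpath ⟨q1, q2 - 1, Or.inr ⟨hp, hq', h.1, h2'⟩⟩
    rcases hmem with h | h
    · exact ⟨_, h, mk_adj4 _ _ _ _ (by omega), mk_adj4 _ _ _ _ (by omega)⟩
    · exact ⟨_, h, mk_adj4 _ _ _ _ (by omega), mk_adj4 _ _ _ _ (by omega)⟩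
  · have hmem : (q1 - 1, q2) ∈ S ∨ (q1, q2 + 1) ∈ S := by
      by_contra h; push_neg at h
      have hq' : (q1 - 1 + 1, q2) ∈ S := by
        rw [show q1 - 1 + 1 = q1 by ring]; exact hq
      have h2' : (q1 - 1 + 1, q2 + 1) ∉ S := by
        rw [show q1 - 1 + 1 = q1 by ring]; exact h.2
      exact hpath ⟨q1 - 1, q2, Or.inr ⟨hq', hp, h.1, h2'⟩⟩
    rcases hmem with h | h
    · exact ⟨_, h, mk_adj4 _ _ _ _ (by omega), mk_adj4 _ _ _ _ (by omega)⟩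
    · exact ⟨_, h, mk_adj4 _ _ _ _ (by omega), mk_adj4 _ _ _ _ (by omega)⟩
  · have hmem : (q1 - 1, q2) ∈ S ∨ (q1, q2 - 1) ∈ S := by
      by_contra h; push_neg at h
      have hq' : (q1 - 1 + 1, q2 - 1 + 1) ∈ S := by
        rw [show q1 - 1 + 1 = q1 by ring, show q2 - 1 + 1 = q2 by ring]; exact hq
      have h1' : (q1 - 1 + 1, q2 - 1) ∉ S := by
        rw [show q1 - 1 + 1 = q1 by ring]; exact h.2
      have h2' : (q1 - 1, q2 - 1 + 1) ∉ S := by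
        rw [show q2 - 1 + 1 = q2 by ring]; exact h.1
      exact hpath ⟨q1 - 1, q2 - 1, Or.inl ⟨hp, hq', h1', h2'⟩⟩
    rcases hmem with h | h
    · exact ⟨_, h, mk_adj4 _ _ _ _ (by omega), mk_adj4 _ _ _ _ (by omega)⟩
    · exact ⟨_, h, mk_adj4 _ _ _ _ (by omega), mk_adj4 _ _ _ _ (by omega)⟩

lemma compOf_eq (S : Set Pt) (hpath : ¬ Patho S) (a : Pt) :
    CompOf S Adj4 a = CompOf S Adj8 a := by
  have key := key_lemma S hpath
  have h48 : ∀ x y, Relation.ReflTransGen (Rel' S Adj4) x y →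
      Relation.ReflTransGen (Rel' S Adj8) x y := fun x y h =>
    Relation.ReflTransGen.mono (fun u v ⟨hu, hv, ha⟩ => ⟨hu, hv, adj4_to_adj8 ha⟩) _ _ h
  have h84 : ∀ x y, Relation.ReflTransGen (Rel' S Adj8) x y →
      Relation.ReflTransGen (Rel' S Adj4) x y := by
    intro x y h
    induction h with
    | refl => exact Relation.ReflTransGen.refl
    | tail _ step ih =>
        obtain ⟨hu, hv, ha⟩ := step
        rcases key _ hu _ hv ha with h4 | ⟨r, hr, h4a, h4b⟩
        · exact ih.tail ⟨hu, hv, h4⟩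
        · exact (ih.tail ⟨hu, hr, h4a⟩).tail ⟨hr, hv, h4b⟩
  ext x
  exact ⟨fun ⟨hx, h⟩ => ⟨hx, h48 _ _ h⟩, fun ⟨hx, h⟩ => ⟨hx, h84 _ _ h⟩⟩

/-- For a set `S` with no pathological configuration, any two 8-adjacent points of
`S` are either 4-adjacent or have a common 4-adjacent point in `S`; consequently
the 4-connected components of `S` coincide with its 8-connected components. -/
theorem no_patho_four_components_eq_eight_components (S : Set Pt)
    (hpath : ¬ Patho S) :
    (∀ p ∈ S, ∀ q ∈ S, Adj8 p q →
      Adj4 p q ∨ ∃ r ∈ S, Adj4 p r ∧ Adj4 r q) ∧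
    {comp | IsComp4 S comp} = {comp | IsComp8 S comp} := by
  refine ⟨key_lemma S hpath, ?_⟩
  ext comp
  simp only [Set.mem_setOf_eq, IsComp4, IsComp8, Conn4, Conn8]
  rw [isComp_iff S Adj4 (fun p q h => adj4_symm' h) comp,
      isComp_iff S Adj8 (fun p q h => adj8_symm' h) comp]
  constructor
  · rintro ⟨a, ha, rfl⟩; exact ⟨a, ha, compOf_eq S hpath a⟩
  · rintro ⟨a, ha, rfl⟩; exact ⟨a, ha, (compOf_eq S hpath a).symm⟩
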